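/- Let X = {x₁,…,xₙ} and Y = {y₁,…,y_m} be disjoint sets of distinct reals, X' ⊆ X the observed subset of size n', N = n + m. Then the minimum of T(X, Y) over all possible real values of the n - n' missing elements of X (chosen distinct from all other values) equals T(X', Y) + (n² - n'²)/4 if N odd and n - n' even, T(X', Y) + (n² - n'² - 1)/4 if N odd and n - n' odd, T(X', Y) + (n² - n'² + 1)/4 if N even and n - n' odd, and T(X', Y) + (n² - n'²)/4 if N even and n - n' even. -/

import Mathlib

open Finset

/-- rank of `x` in `Z`: number of elements of `Z` less than or equal to `x`. -/
noncomputable def rk (x : ℝ) (Z : Finset ℝ) : ℕ := (Z.filter (fun z => z ≤ x)).card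

/-- Ansari-Bradley test statistic. -/
noncomputable def ABT (A B : Finset ℝ) : ℝ :=
  ∑ a ∈ A, |(rk a (A ∪ B) : ℝ) - (((A ∪ B).card : ℝ) + 1) / 2|

lemma rk_le_card (x : ℝ) (Z : Finset ℝ) : rk x Z ≤ Z.card := card_filter_le _ _

lemma one_le_rk {a : ℝ} {Z : Finset ℝ} (ha : a ∈ Z) : 1 ≤ rk a Z :=
  card_pos.2 ⟨a, mem_filter.2 ⟨ha, le_refl a⟩⟩

lemma rk_mono {a b : ℝ} (Z : Finset ℝ) (h : a ≤ b) : rk a Z ≤ rk b Z := by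
  apply card_le_card
  intro z hz
  simp only [mem_filter] at *
  exact ⟨hz.1, hz.2.trans h⟩

lemma rk_lt_rk {a b : ℝ} {Z : Finset ℝ} (hb : b ∈ Z) (hab : a < b) : rk a Z < rk b Z := by
  apply card_lt_card
  rw [Finset.ssubset_def]
  constructor
  · intro z hz
    simp only [mem_filter] at *
    exact ⟨hz.1, hz.2.trans hab.le⟩
  · intro hsub
    have := hsub (mem_filter.2 ⟨hb, le_refl b⟩)
    simp only [mem_filter] at this
    exact absurd this.2 (not_le.2 hab)

lemma rk_injOn (Z : Finset ℝ) : Set.InjOn (fun z => rk z Z) Z := by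
  intro a ha b hb h
  by_contra hne
  rcases lt_or_gt_of_ne hne with hlt | hlt
  · exact absurd h (Nat.ne_of_lt (rk_lt_rk hb hlt))
  · exact absurd h.symm (Nat.ne_of_lt (rk_lt_rk ha hlt))

lemma rk_insert {x : ℝ} (a : ℝ) {Z : Finset ℝ} (hx : x ∉ Z) :
    rk a (insert x Z) = rk a Z + if x ≤ a then 1 else 0 := by
  unfold rk
  rw [filter_insert]
  split
  · rw [card_insert_of_notMem (fun h => hx (mem_of_mem_filter _ h))]
  · rw [Nat.add_zero]

lemma rk_insert_real {x : ℝ} (a : ℝ) {Z : Finset ℝ} (hx : x ∉ Z) :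
    (rk a (insert x Z) : ℝ) = rk a Z + if x ≤ a then 1 else 0 := by
  rw [rk_insert a hx]
  split <;> simp

lemma pt_eq (x a : ℝ) (hne : x ≠ a) (r L : ℕ) :
    |(r : ℝ) + (if x ≤ a then 1 else 0) - ((L : ℝ) + 1) / 2| =
      |(r : ℝ) - (L : ℝ) / 2| + 1 / 2 -
        (if (x < a ∧ 2 * r + 1 ≤ L) ∨ (a < x ∧ L + 1 ≤ 2 * r) then (1:ℝ) else 0) := by
  rcases hne.lt_or_gt with h | h
  · rw [if_pos h.le]
    by_cases hc : 2 * r + 1 ≤ L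
    · rw [if_pos (Or.inl ⟨h, hc⟩)]
      have h1 : (2*r+1 : ℝ) ≤ L := by exact_mod_cast hc
      rw [abs_of_nonpos (by linarith), abs_of_nonpos (by linarith)]
      ring
    · rw [if_neg (by rintro (⟨_, hc'⟩ | ⟨h', _⟩) <;> first | exact hc hc' | exact absurd h (asymm h'))]
      have h1 : (L : ℝ) ≤ 2*r := by exact_mod_cast by omega
      rw [abs_of_nonneg (by linarith), abs_of_nonneg (by linarith)]
      ring
  · rw [if_neg (not_le.2 h)]
    by_cases hc : L + 1 ≤ 2 * r
    · rw [if_pos (Or.inr ⟨h, hc⟩)]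
      have h1 : (L+1 : ℝ) ≤ 2*r := by exact_mod_cast hc
      rw [abs_of_nonneg (by linarith), abs_of_nonneg (by linarith)]
      ring
    · rw [if_neg (by rintro (⟨h', _⟩ | ⟨_, hc'⟩) <;> first | exact hc hc' | exact absurd h (asymm h'))]
      have h1 : (2*r : ℝ) ≤ L := by exact_mod_cast by omega
      rw [abs_of_nonpos (by linarith), abs_of_nonpos (by linarith)]
      ring

lemma step_identity (A B : Finset ℝ) (x : ℝ) (hx : x ∉ A ∪ B) :
    ABT (insert x A) B =
      ABT A B + (A.card : ℝ) / 2
        + |(rk x (A ∪ B) : ℝ) + 1 - (((A ∪ B).card : ℝ) + 2) / 2|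
        - ((A.filter (fun a =>
            (x < a ∧ 2 * rk a (A ∪ B) + 1 ≤ (A ∪ B).card + 1)
            ∨ (a < x ∧ (A ∪ B).card + 1 + 1 ≤ 2 * rk a (A ∪ B)))).card : ℝ) := by
  have hxA : x ∉ A := fun h => hx (mem_union_left _ h)
  unfold ABT
  rw [insert_union, card_insert_of_notMem hx, sum_insert hxA]
  have hterm : ∀ a ∈ A, |(rk a (insert x (A ∪ B)) : ℝ) - ((((A ∪ B).card + 1 : ℕ) : ℝ) + 1) / 2| =
      |(rk a (A ∪ B) : ℝ) - (((A ∪ B).card : ℝ) + 1) / 2| + 1/2 -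
        (if (x < a ∧ 2 * rk a (A ∪ B) + 1 ≤ (A ∪ B).card + 1)
            ∨ (a < x ∧ (A ∪ B).card + 1 + 1 ≤ 2 * rk a (A ∪ B)) then (1:ℝ) else 0) := by
    intro a ha
    have hne : x ≠ a := fun h => hxA (h ▸ ha)
    rw [rk_insert_real a hx]
    have h := pt_eq x a hne (rk a (A ∪ B)) ((A ∪ B).card + 1)
    push_cast at h ⊢
    convert h using 3 <;> push_cast <;> ring
  rw [sum_congr rfl hterm]
  have hx1 : (rk x (insert x (A ∪ B)) : ℝ) = rk x (A ∪ B) + 1 := by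
    rw [rk_insert_real x hx, if_pos (le_refl x)]
  rw [hx1]
  have habs : |(rk x (A ∪ B) : ℝ) + 1 - ((((A ∪ B).card + 1 : ℕ) : ℝ) + 1) / 2| =
      |(rk x (A ∪ B) : ℝ) + 1 - (((A ∪ B).card : ℝ) + 2) / 2| := by
    congr 1
    push_cast
    ring
  rw [habs, Finset.sum_sub_distrib, Finset.sum_add_distrib, Finset.sum_const, Finset.sum_boole]
  simp only [nsmul_eq_mul]
  ring

lemma count_bound (A B : Finset ℝ) (x : ℝ) (hx : x ∉ A ∪ B) :
    ((A.filter (fun a =>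
        (x < a ∧ 2 * rk a (A ∪ B) + 1 ≤ (A ∪ B).card + 1)
        ∨ (a < x ∧ (A ∪ B).card + 1 + 1 ≤ 2 * rk a (A ∪ B)))).card : ℝ)
      ≤ |(rk x (A ∪ B) : ℝ) + 1 - (((A ∪ B).card : ℝ) + 2) / 2|
        - (if Odd ((A ∪ B).card + 1) then (0:ℝ) else 1/2) := by
  set Z := A ∪ B with hZ
  set Df := A.filter (fun a =>
        (x < a ∧ 2 * rk a Z + 1 ≤ Z.card + 1)
        ∨ (a < x ∧ Z.card + 1 + 1 ≤ 2 * rk a Z)) with hDf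
  have hinj : Set.InjOn (fun z => rk z Z) Df := by
    apply (rk_injOn Z).mono
    intro a ha
    have h1 : a ∈ Df := ha
    have h2 : a ∈ A := mem_of_mem_filter _ h1
    rw [hZ]
    exact mem_union_left B h2
  by_cases hlow : 2 * rk x Z + 1 ≤ Z.card + 1
  · -- low: all elements of Df are of type 1
    have hmap : ∀ a ∈ Df, rk a Z ∈ Icc (rk x Z + 1) (Z.card / 2) := by
      intro a ha
      rw [hDf, mem_filter] at ha
      rcases ha.2 with ⟨h1, h2⟩ | ⟨h1, h2⟩
      · have hlt : rk x Z < rk a Z := rk_lt_rk (by rw [hZ]; exact mem_union_left B ha.1) h1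
        exact mem_Icc.2 ⟨hlt, by omega⟩
      · have hle : rk a Z ≤ rk x Z := rk_mono Z h1.le
        omega
    have hcard : Df.card ≤ Z.card / 2 + 1 - (rk x Z + 1) :=
      (card_le_card_of_injOn _ hmap hinj).trans_eq (Nat.card_Icc _ _)
    rcases Nat.even_or_odd Z.card with ⟨l, hl⟩ | ⟨l, hl⟩
    · -- Z.card = 2l, L = 2l+1 odd
      rw [if_pos (by rw [Nat.odd_iff]; omega : Odd (Z.card + 1))]
      have h2' : (Df.card : ℝ) + rk x Z ≤ l := by exact_mod_cast (by omega : Df.card + rk x Z ≤ l)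
      have h3' : (rk x Z : ℝ) ≤ l := by exact_mod_cast (by omega : rk x Z ≤ l)
      have hc' : (Z.card : ℝ) = 2 * l := by exact_mod_cast (by omega : Z.card = 2 * l)
      rw [abs_of_nonpos (by rw [hc']; linarith)]
      rw [hc']; linarith
    · -- Z.card = 2l+1, L = 2l+2 even
      rw [if_neg (by rw [Nat.odd_iff]; omega : ¬ Odd (Z.card + 1))]
      have h2' : (Df.card : ℝ) + rk x Z ≤ l := by exact_mod_cast (by omega : Df.card + rk x Z ≤ l)
      have h3' : (rk x Z : ℝ) ≤ l := by exact_mod_cast (by omega : rk x Z ≤ l)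
      have hc' : (Z.card : ℝ) = 2 * l + 1 := by exact_mod_cast (by omega : Z.card = 2 * l + 1)
      rw [abs_of_nonpos (by rw [hc']; linarith)]
      rw [hc']; linarith
  · -- high: all elements of Df are of type 2
    have hmap : ∀ a ∈ Df, rk a Z ∈ Icc ((Z.card + 3) / 2) (rk x Z) := by
      intro a ha
      rw [hDf, mem_filter] at ha
      rcases ha.2 with ⟨h1, h2⟩ | ⟨h1, h2⟩
      · have hlt : rk x Z < rk a Z := rk_lt_rk (by rw [hZ]; exact mem_union_left B ha.1) h1
        omega
      · have hle : rk a Z ≤ rk x Z := rk_mono Z h1.le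
        exact mem_Icc.2 ⟨by omega, hle⟩
    have hcard : Df.card ≤ rk x Z + 1 - ((Z.card + 3) / 2) :=
      (card_le_card_of_injOn _ hmap hinj).trans_eq (Nat.card_Icc _ _)
    rcases Nat.even_or_odd Z.card with ⟨l, hl⟩ | ⟨l, hl⟩
    · -- Z.card = 2l, L = 2l+1 odd
      rw [if_pos (by rw [Nat.odd_iff]; omega : Odd (Z.card + 1))]
      have h2' : (Df.card : ℝ) + l ≤ rk x Z := by exact_mod_cast (by omega : Df.card + l ≤ rk x Z)
      have h3' : (l : ℝ) ≤ rk x Z := by exact_mod_cast (by omega : l ≤ rk x Z)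
      have hc' : (Z.card : ℝ) = 2 * l := by exact_mod_cast (by omega : Z.card = 2 * l)
      rw [abs_of_nonneg (by rw [hc']; linarith)]
      rw [hc']; linarith
    · -- Z.card = 2l+1, L = 2l+2 even
      rw [if_neg (by rw [Nat.odd_iff]; omega : ¬ Odd (Z.card + 1))]
      have h2' : (Df.card : ℝ) + l + 1 ≤ rk x Z := by
        exact_mod_cast (by omega : Df.card + l + 1 ≤ rk x Z)
      have h3' : (l : ℝ) + 1 ≤ rk x Z := by exact_mod_cast (by omega : l + 1 ≤ rk x Z)
      have hc' : (Z.card : ℝ) = 2 * l + 1 := by exact_mod_cast (by omega : Z.card = 2 * l + 1)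
      rw [abs_of_nonneg (by rw [hc']; linarith)]
      rw [hc']; linarith

lemma exists_rk (Z : Finset ℝ) (j : ℕ) (hj : j ≤ Z.card) : ∃ x, x ∉ Z ∧ rk x Z = j := by
  rcases Nat.eq_zero_or_pos j with rfl | hj1
  · rcases Z.eq_empty_or_nonempty with rfl | hZ
    · exact ⟨0, by simp, by simp [rk]⟩
    · refine ⟨Z.min' hZ - 1, fun h => ?_, ?_⟩
      · have := Z.min'_le _ h
        linarith
      · unfold rk
        rw [Finset.card_eq_zero, filter_eq_empty_iff]
        intro z hz
        have := Z.min'_le z hz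
        simp only [not_le]
        linarith
  · have hsurj : ∃ z ∈ Z, rk z Z = j := by
      have h1 : Z.image (fun z => rk z Z) ⊆ Icc 1 Z.card := by
        intro r hr
        rcases mem_image.1 hr with ⟨z, hz, rfl⟩
        exact mem_Icc.2 ⟨one_le_rk hz, rk_le_card _ _⟩
      have h2 : Z.image (fun z => rk z Z) = Icc 1 Z.card := by
        apply eq_of_subset_of_card_le h1
        rw [card_image_of_injOn (rk_injOn Z), Nat.card_Icc]
        omega
      have h3 : j ∈ Z.image (fun z => rk z Z) := by
        rw [h2]; exact mem_Icc.2 ⟨hj1, hj⟩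
      rcases mem_image.1 h3 with ⟨z, hz, hzj⟩
      exact ⟨z, hz, hzj⟩
    obtain ⟨z, hzZ, hzj⟩ := hsurj
    set U := Z.filter (fun w => z < w) with hU
    rcases U.eq_empty_or_nonempty with hUe | hUe
    · refine ⟨z + 1, fun h => ?_, ?_⟩
      · have : z + 1 ∈ U := by rw [hU]; exact mem_filter.2 ⟨h, by linarith⟩
        rw [hUe] at this
        exact absurd this (notMem_empty _)
      · rw [← hzj]
        unfold rk
        congr 1
        apply filter_congr
        intro w hw
        constructor
        · intro hw1
          by_contra hw2
          have : w ∈ U := by rw [hU]; exact mem_filter.2 ⟨hw, lt_of_not_ge hw2⟩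
          rw [hUe] at this
          exact absurd this (notMem_empty _)
        · intro hw1; linarith
    · set u := U.min' hUe with hu
      have hzu : z < u := by
        have h0 := U.min'_mem hUe
        have h2 : u ∈ Z.filter (fun w => z < w) := h0
        exact (mem_filter.1 h2).2
      refine ⟨(z + u) / 2, fun h => ?_, ?_⟩
      · have h1 : (z + u) / 2 ∈ U := by
          rw [hU]; exact mem_filter.2 ⟨h, by linarith⟩
        have := U.min'_le _ h1
        rw [← hu] at this
        linarith
      · rw [← hzj]
        unfold rk
        congr 1
        apply filter_congr
        intro w hw
        constructor
        · intro hw1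
          by_contra hw2
          have h1 : w ∈ U := by rw [hU]; exact mem_filter.2 ⟨hw, lt_of_not_ge hw2⟩
          have := U.min'_le _ h1
          rw [← hu] at this
          linarith
        · intro hw1; linarith

lemma step_lower (A B : Finset ℝ) (x : ℝ) (hx : x ∉ A ∪ B) :
    ABT A B + (A.card : ℝ)/2 + (if Odd ((A ∪ B).card + 1) then (0:ℝ) else 1/2)
      ≤ ABT (insert x A) B := by
  rw [step_identity A B x hx]
  have h1 := count_bound A B x hx
  linarith

lemma step_exists (A B : Finset ℝ) :
    ∃ x, x ∉ A ∪ B ∧ ABT (insert x A) B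
      = ABT A B + (A.card : ℝ)/2 + (if Odd ((A ∪ B).card + 1) then (0:ℝ) else 1/2) := by
  obtain ⟨x, hxZ, hxr⟩ := exists_rk (A ∪ B) (((A ∪ B).card + 1)/2) (by omega)
  refine ⟨x, hxZ, ?_⟩
  rw [step_identity A B x hxZ]
  have hDf : (A.filter (fun a =>
      (x < a ∧ 2 * rk a (A ∪ B) + 1 ≤ (A ∪ B).card + 1)
      ∨ (a < x ∧ (A ∪ B).card + 1 + 1 ≤ 2 * rk a (A ∪ B)))) = ∅ := by
    rw [filter_eq_empty_iff]
    intro a ha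
    rintro (⟨hlt, hr⟩ | ⟨hlt, hr⟩)
    · have h1 : rk x (A ∪ B) < rk a (A ∪ B) := rk_lt_rk (mem_union_left B ha) hlt
      omega
    · have h1 : rk a (A ∪ B) ≤ rk x (A ∪ B) := rk_mono (A ∪ B) hlt.le
      omega
  rw [hDf]
  rcases Nat.even_or_odd (A ∪ B).card with ⟨l, hl⟩ | ⟨l, hl⟩
  · rw [if_pos (by rw [Nat.odd_iff]; omega : Odd ((A ∪ B).card + 1))]
    have h1 : (rk x (A ∪ B) : ℝ) = l := by exact_mod_cast (by omega : rk x (A ∪ B) = l)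
    have hc' : ((A ∪ B).card : ℝ) = 2 * l := by exact_mod_cast (by omega : (A ∪ B).card = 2 * l)
    rw [h1, hc']
    rw [show |(l:ℝ) + 1 - (2*l+2)/2| = 0 by rw [abs_eq_zero]; ring]
    simp
  · rw [if_neg (by rw [Nat.odd_iff]; omega : ¬ Odd ((A ∪ B).card + 1))]
    have h1 : (rk x (A ∪ B) : ℝ) = l + 1 := by exact_mod_cast (by omega : rk x (A ∪ B) = l + 1)
    have hc' : ((A ∪ B).card : ℝ) = 2 * l + 1 := by
      exact_mod_cast (by omega : (A ∪ B).card = 2 * l + 1)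
    rw [h1, hc']
    rw [show |(l:ℝ) + 1 + 1 - (2*l+1+2)/2| = 1/2 by rw [abs_of_nonneg (by linarith)]; ring]
    simp

noncomputable def lb (a M k : ℕ) : ℝ :=
  ((k:ℝ) * ((k:ℝ) + 2*(a:ℝ))) / 4 +
    (if Even k then 0 else if Odd (M + k) then -(1/4) else 1/4)

lemma lb_zero (a M : ℕ) : lb a M 0 = 0 := by simp [lb]

lemma lb_succ (a M k : ℕ) :
    lb a M (k+1) = lb a M k + ((a:ℝ) + k)/2 + (if Odd (M + k + 1) then (0:ℝ) else 1/2) := by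
  unfold lb
  rcases Nat.even_or_odd k with hk | hk <;> rcases Nat.even_or_odd (M+k) with hm | hm
  · rw [Nat.even_iff] at hk; rw [Nat.even_iff] at hm
    rw [if_pos (by rw [Nat.even_iff]; omega : Even k),
      if_neg (by rw [Nat.even_iff]; omega : ¬ Even (k+1)),
      if_pos (by rw [Nat.odd_iff]; omega : Odd (M+(k+1))),
      if_pos (by rw [Nat.odd_iff]; omega : Odd (M+k+1))]
    push_cast; ring
  · rw [Nat.even_iff] at hk; rw [Nat.odd_iff] at hm
    rw [if_pos (by rw [Nat.even_iff]; omega : Even k),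
      if_neg (by rw [Nat.even_iff]; omega : ¬ Even (k+1)),
      if_neg (by rw [Nat.odd_iff]; omega : ¬ Odd (M+(k+1))),
      if_neg (by rw [Nat.odd_iff]; omega : ¬ Odd (M+k+1))]
    push_cast; ring
  · rw [Nat.odd_iff] at hk; rw [Nat.even_iff] at hm
    rw [if_neg (by rw [Nat.even_iff]; omega : ¬ Even k),
      if_pos (by rw [Nat.even_iff]; omega : Even (k+1)),
      if_neg (by rw [Nat.odd_iff]; omega : ¬ Odd (M+k)),
      if_pos (by rw [Nat.odd_iff]; omega : Odd (M+k+1))]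
    push_cast; ring
  · rw [Nat.odd_iff] at hk; rw [Nat.odd_iff] at hm
    rw [if_neg (by rw [Nat.even_iff]; omega : ¬ Even k),
      if_pos (by rw [Nat.even_iff]; omega : Even (k+1)),
      if_pos (by rw [Nat.odd_iff]; omega : Odd (M+k)),
      if_neg (by rw [Nat.odd_iff]; omega : ¬ Odd (M+k+1))]
    push_cast; ring

lemma exists_min (Xp Y : Finset ℝ) (hd : Disjoint Xp Y) (k : ℕ) :
    ∃ Xt : Finset ℝ, Xt.card = k ∧ Disjoint Xt (Xp ∪ Y) ∧
      ABT (Xp ∪ Xt) Y = ABT Xp Y + lb Xp.card (Xp ∪ Y).card k := by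
  induction k with
  | zero => exact ⟨∅, card_empty, disjoint_empty_left _, by rw [union_empty, lb_zero, add_zero]⟩
  | succ k ih =>
    obtain ⟨Xt', hcard, hdisj, hval⟩ := ih
    have hdXpXt : Disjoint Xp Xt' := (disjoint_union_left.1 hdisj.symm).1
    have hdXtY : Disjoint Xt' Y := (disjoint_union_right.1 hdisj).2
    have hdAY : Disjoint (Xp ∪ Xt') Y := disjoint_union_left.2 ⟨hd, hdXtY⟩
    obtain ⟨x, hxZ, heq⟩ := step_exists (Xp ∪ Xt') Y
    have hxXt : x ∉ Xt' := fun h => hxZ (mem_union_left _ (mem_union_right _ h))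
    have hxXpY : x ∉ Xp ∪ Y := by
      intro h
      rcases mem_union.1 h with h1 | h1
      · exact hxZ (mem_union_left _ (mem_union_left _ h1))
      · exact hxZ (mem_union_right _ h1)
    refine ⟨insert x Xt', ?_, ?_, ?_⟩
    · rw [card_insert_of_notMem hxXt, hcard]
    · exact disjoint_insert_left.2 ⟨hxXpY, hdisj⟩
    · have hu : Xp ∪ insert x Xt' = insert x (Xp ∪ Xt') := by
        rw [union_insert]
      rw [hu, heq, hval]
      have hA : (Xp ∪ Xt').card = Xp.card + k := by
        rw [card_union_of_disjoint hdXpXt, hcard]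
      have hAY : ((Xp ∪ Xt') ∪ Y).card = (Xp ∪ Y).card + k := by
        rw [union_right_comm, card_union_of_disjoint hdisj.symm, hcard]
      rw [hA, hAY, lb_succ]
      push_cast
      ring

lemma lower_bd (Xp Y : Finset ℝ) (hd : Disjoint Xp Y) (k : ℕ) :
    ∀ Xt : Finset ℝ, Xt.card = k → Disjoint Xt (Xp ∪ Y) →
      ABT Xp Y + lb Xp.card (Xp ∪ Y).card k ≤ ABT (Xp ∪ Xt) Y := by
  induction k with
  | zero =>
    intro Xt hcard _
    rw [card_eq_zero.1 hcard, union_empty, lb_zero, add_zero]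
  | succ k ih =>
    intro Xt hcard hdisj
    have hne : Xt.Nonempty := card_pos.1 (by omega)
    obtain ⟨x, hxXt⟩ := hne
    set Xt' := Xt.erase x with hXt'
    have hins : Xt = insert x Xt' := by rw [hXt', insert_erase hxXt]
    have hcard' : Xt'.card = k := by rw [hXt', card_erase_of_mem hxXt, hcard]; omega
    have hdisj' : Disjoint Xt' (Xp ∪ Y) := disjoint_of_subset_left (erase_subset _ _) hdisj
    have hxXpY : x ∉ Xp ∪ Y := disjoint_left.1 hdisj hxXt
    have hdXpXt : Disjoint Xp Xt' := (disjoint_union_left.1 hdisj'.symm).1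
    have hdXtY : Disjoint Xt' Y := (disjoint_union_right.1 hdisj').2
    have hxZ : x ∉ (Xp ∪ Xt') ∪ Y := by
      intro h
      rcases mem_union.1 h with h1 | h1
      · rcases mem_union.1 h1 with h2 | h2
        · exact hxXpY (mem_union_left _ h2)
        · exact notMem_erase x Xt h2
      · exact hxXpY (mem_union_right _ h1)
    have hstep := step_lower (Xp ∪ Xt') Y x hxZ
    have hIH := ih Xt' hcard' hdisj'
    have hA : (Xp ∪ Xt').card = Xp.card + k := by
      rw [card_union_of_disjoint hdXpXt, hcard']
    have hAY : ((Xp ∪ Xt') ∪ Y).card = (Xp ∪ Y).card + k := by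
      rw [union_right_comm, card_union_of_disjoint hdisj'.symm, hcard']
    rw [hA, hAY] at hstep
    rw [hins, union_insert]
    rw [lb_succ]
    push_cast at hstep ⊢
    linarith


theorem stmt14 (Xp Y : Finset ℝ) (n m n' N : ℕ)
    (hd : Disjoint Xp Y) (hn' : Xp.card = n') (hle : n' ≤ n)
    (hm : Y.card = m) (hN : N = n + m) :
    IsLeast { t : ℝ | ∃ Xt : Finset ℝ, Xt.card = n - n' ∧ Disjoint Xt (Xp ∪ Y) ∧
        t = ABT (Xp ∪ Xt) Y }
      (ABT Xp Y +
        (if Even (n - n') then ((n : ℝ) ^ 2 - (n' : ℝ) ^ 2) / 4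
         else if Odd N then ((n : ℝ) ^ 2 - (n' : ℝ) ^ 2 - 1) / 4
         else ((n : ℝ) ^ 2 - (n' : ℝ) ^ 2 + 1) / 4)) := by
  have hMN : (Xp ∪ Y).card + (n - n') = N := by
    rw [card_union_of_disjoint hd, hn', hm]
    omega
  have hlbeq : lb Xp.card (Xp ∪ Y).card (n - n') =
      (if Even (n - n') then ((n : ℝ) ^ 2 - (n' : ℝ) ^ 2) / 4
       else if Odd N then ((n : ℝ) ^ 2 - (n' : ℝ) ^ 2 - 1) / 4
       else ((n : ℝ) ^ 2 - (n' : ℝ) ^ 2 + 1) / 4) := by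
    unfold lb
    rw [hn', hMN]
    have hcast : ((n - n' : ℕ) : ℝ) = (n : ℝ) - (n' : ℝ) := by
      push_cast [hle]
      ring
    split_ifs <;> rw [hcast] <;> ring
  constructor
  · obtain ⟨Xt, hcard, hdisj, hval⟩ := exists_min Xp Y hd (n - n')
    exact ⟨Xt, hcard, hdisj, by rw [hval, hlbeq]⟩
  · rintro t ⟨Xt, hcard, hdisj, rfl⟩
    rw [← hlbeq]
    exact lower_bd Xp Y hd (n - n') Xt hcard hdisj
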